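/- Let a, α₁, α₂ ∈ ℝ and define U : (1/2, 1) → ℝ by U(t) = −(a/18)·(6t³·log((1−t)/t) + 6t² + 3t − 1) + α₁·(3t² − 3t + 1) + α₂·(1−t)³. Then for every t ∈ (1/2, 1): U''(t) + (2(2t−1)/(t(1−t)))·U'(t) − (6/(t(1−t)))·U(t) = a/(1−t)². Moreover U extends to a C² function on [1/2, 1) with U(1/2) = −a/9 + α₁/4 + α₂/8 and U'(1/2) = −a/3 − (3/4)·α₂. -/

import Mathlib

open Set

private lemma hasDerivAt_logq {t : ℝ} (h0 : 0 < t) (h1 : t < 1) :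
    HasDerivAt (fun t : ℝ => Real.log ((1-t)/t)) (-1/(t*(1-t))) t := by
  have ht : t ≠ 0 := ne_of_gt h0
  have h1t : (1:ℝ) - t ≠ 0 := by intro h; nlinarith
  have hne : (1-t)/t ≠ 0 := div_ne_zero h1t ht
  have hd : HasDerivAt (fun t : ℝ => (1-t)/t) (((0-1)*t - (1-t)*1)/t^2) t := by
    exact ((hasDerivAt_const t (1:ℝ)).sub (hasDerivAt_id t)).div (hasDerivAt_id t) ht
  have h2 := hd.log hne
  convert h2 using 1
  field_simp
  ring

private lemma hd1 (a α₁ α₂ : ℝ) {t : ℝ} (h0 : 0 < t) (h1 : t < 1) :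
    HasDerivAt (fun t => -(a/18) * (6*t^3 * Real.log ((1-t)/t) + 6*t^2 + 3*t - 1)
        + α₁ * (3*t^2 - 3*t + 1) + α₂ * (1-t)^3)
      (-(a/18) * (18*t^2 * Real.log ((1-t)/t) - 6*t^2/(1-t) + 12*t + 3)
        + α₁ * (6*t-3) - 3*α₂*(1-t)^2) t := by
  have ht : t ≠ 0 := ne_of_gt h0
  have h1t : (1:ℝ) - t ≠ 0 := by intro h; nlinarith
  have hcube : HasDerivAt (fun t : ℝ => 6*t^3) (18*t^2) t := by
    have := (hasDerivAt_pow 3 t).const_mul (6:ℝ)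
    exact this.congr_deriv (by push_cast; ring)
  have hprod : HasDerivAt (fun t : ℝ => 6*t^3 * Real.log ((1-t)/t))
      (18*t^2 * Real.log ((1-t)/t) + 6*t^3 * (-1/(t*(1-t)))) t :=
    hcube.mul (hasDerivAt_logq h0 h1)
  have hsq : HasDerivAt (fun t : ℝ => 6*t^2) (12*t) t := by
    have := (hasDerivAt_pow 2 t).const_mul (6:ℝ)
    exact this.congr_deriv (by push_cast; ring)
  have hlin : HasDerivAt (fun t : ℝ => 3*t) 3 t := by
    simpa using (hasDerivAt_id t).const_mul (3:ℝ)
  have hq : HasDerivAt (fun t : ℝ => 3*t^2 - 3*t + 1) (6*t - 3) t := by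
    have := (((hasDerivAt_pow 2 t).const_mul (3:ℝ)).sub hlin).add_const (1:ℝ)
    exact this.congr_deriv (by push_cast; ring)
  have hcub2 : HasDerivAt (fun t : ℝ => (1-t)^3) (-3*(1-t)^2) t := by
    have h := ((hasDerivAt_const t (1:ℝ)).sub (hasDerivAt_id t)).pow 3
    exact h.congr_deriv (by simp only [Pi.sub_apply, id_eq]; push_cast; ring)
  have H := ((((hprod.add hsq).add hlin).sub_const (1:ℝ)).const_mul (-(a/18))).add
      (hq.const_mul α₁) |>.add (hcub2.const_mul α₂)
  exact H.congr_deriv (by field_simp; ring)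

private lemma hd2 (a α₁ α₂ : ℝ) {t : ℝ} (h0 : 0 < t) (h1 : t < 1) :
    HasDerivAt (fun t => -(a/18) * (18*t^2 * Real.log ((1-t)/t) - 6*t^2/(1-t) + 12*t + 3)
        + α₁ * (6*t-3) - 3*α₂*(1-t)^2)
      (-(a/18) * (36*t * Real.log ((1-t)/t) - 18*t/(1-t) - (12*t-6*t^2)/(1-t)^2 + 12)
        + 6*α₁ + 6*α₂*(1-t)) t := by
  have ht : t ≠ 0 := ne_of_gt h0
  have h1t : (1:ℝ) - t ≠ 0 := by intro h; nlinarith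
  have hsq : HasDerivAt (fun t : ℝ => 18*t^2) (36*t) t := by
    have := (hasDerivAt_pow 2 t).const_mul (18:ℝ)
    exact this.congr_deriv (by push_cast; ring)
  have hprod : HasDerivAt (fun t : ℝ => 18*t^2 * Real.log ((1-t)/t))
      (36*t * Real.log ((1-t)/t) + 18*t^2 * (-1/(t*(1-t)))) t :=
    hsq.mul (hasDerivAt_logq h0 h1)
  have hnum : HasDerivAt (fun t : ℝ => 6*t^2) (12*t) t := by
    have := (hasDerivAt_pow 2 t).const_mul (6:ℝ)
    exact this.congr_deriv (by push_cast; ring)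
  have hden : HasDerivAt (fun t : ℝ => (1-t)) (-1) t := by
    exact ((hasDerivAt_const t (1:ℝ)).sub (hasDerivAt_id t)).congr_deriv (by ring)
  have hdiv : HasDerivAt (fun t : ℝ => 6*t^2/(1-t))
      ((12*t*(1-t) - 6*t^2*(-1))/(1-t)^2) t := hnum.div hden h1t
  have hlin : HasDerivAt (fun t : ℝ => 12*t) 12 t := by
    simpa using (hasDerivAt_id t).const_mul (12:ℝ)
  have hq : HasDerivAt (fun t : ℝ => 6*t - 3) 6 t := by
    simpa using ((hasDerivAt_id t).const_mul (6:ℝ)).sub_const (3:ℝ)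
  have hsq2 : HasDerivAt (fun t : ℝ => (1-t)^2) (-2*(1-t)) t := by
    have h := ((hasDerivAt_const t (1:ℝ)).sub (hasDerivAt_id t)).pow 2
    exact h.congr_deriv (by simp only [Pi.sub_apply, id_eq]; push_cast; ring)
  have H := ((((hprod.sub hdiv).add hlin).add_const (3:ℝ)).const_mul (-(a/18))).add
      (hq.const_mul α₁) |>.sub (hsq2.const_mul (3*α₂))
  exact H.congr_deriv (by field_simp; ring)

theorem stmt3 (a α₁ α₂ : ℝ) (U : ℝ → ℝ)
    (hU : ∀ t, U t = -(a/18) * (6*t^3 * Real.log ((1-t)/t) + 6*t^2 + 3*t - 1)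
        + α₁ * (3*t^2 - 3*t + 1) + α₂ * (1-t)^3) :
    (∀ t ∈ Ioo (1/2 : ℝ) 1,
      deriv (deriv U) t + (2*(2*t-1)/(t*(1-t))) * deriv U t - (6/(t*(1-t))) * U t
        = a/(1-t)^2) ∧
    ContDiffOn ℝ 2 U (Ico (1/2 : ℝ) 1) ∧
    U (1/2) = -a/9 + α₁/4 + α₂/8 ∧
    deriv U (1/2) = -a/3 - (3/4) * α₂ := by
  have hUe : U = fun t => -(a/18) * (6*t^3 * Real.log ((1-t)/t) + 6*t^2 + 3*t - 1)
        + α₁ * (3*t^2 - 3*t + 1) + α₂ * (1-t)^3 := funext hU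
  subst hUe
  set U1 : ℝ → ℝ := fun t => -(a/18) * (18*t^2 * Real.log ((1-t)/t) - 6*t^2/(1-t) + 12*t + 3)
        + α₁ * (6*t-3) - 3*α₂*(1-t)^2 with hU1def
  have hderiv : ∀ t ∈ Ioo (0:ℝ) 1, deriv (fun t => -(a/18) * (6*t^3 * Real.log ((1-t)/t) + 6*t^2 + 3*t - 1)
        + α₁ * (3*t^2 - 3*t + 1) + α₂ * (1-t)^3) t = U1 t := by
    intro t ht
    exact (hd1 a α₁ α₂ ht.1 ht.2).deriv
  have hderivEq : ∀ t ∈ Ioo (0:ℝ) 1,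
      deriv (deriv (fun t => -(a/18) * (6*t^3 * Real.log ((1-t)/t) + 6*t^2 + 3*t - 1)
        + α₁ * (3*t^2 - 3*t + 1) + α₂ * (1-t)^3)) t
      = -(a/18) * (36*t * Real.log ((1-t)/t) - 18*t/(1-t) - (12*t-6*t^2)/(1-t)^2 + 12)
        + 6*α₁ + 6*α₂*(1-t) := by
    intro t ht
    have hev : deriv (fun t => -(a/18) * (6*t^3 * Real.log ((1-t)/t) + 6*t^2 + 3*t - 1)
        + α₁ * (3*t^2 - 3*t + 1) + α₂ * (1-t)^3) =ᶠ[nhds t] U1 := by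
      filter_upwards [isOpen_Ioo.mem_nhds ht] with x hx
      exact hderiv x hx
    rw [hev.deriv_eq]
    exact (hd2 a α₁ α₂ ht.1 ht.2).deriv
  have hhalf : ((1:ℝ)/2) ∈ Ioo (0:ℝ) 1 := by norm_num
  refine ⟨?_, ?_, ?_, ?_⟩
  · intro t ht
    have ht0 : (0:ℝ) < t := lt_trans (by norm_num) ht.1
    have ht1 : t < 1 := ht.2
    have hIoo : t ∈ Ioo (0:ℝ) 1 := ⟨ht0, ht1⟩
    rw [hderivEq t hIoo, hderiv t hIoo, hU1def]
    have h1t : (1:ℝ) - t ≠ 0 := by intro h; nlinarith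
    have ht' : t ≠ 0 := ne_of_gt ht0
    field_simp
    ring
  · intro t ht
    have hIoo : t ∈ Ioo (0:ℝ) 1 := ⟨lt_of_lt_of_le (by norm_num) ht.1, ht.2⟩
    have ht' : t ≠ 0 := ne_of_gt hIoo.1
    have hne : (1-t)/t ≠ 0 := by
      apply div_ne_zero _ ht'
      intro h; nlinarith [hIoo.2]
    apply ContDiffAt.contDiffWithinAt
    have hlogC : ContDiffAt ℝ 2 (fun t : ℝ => Real.log ((1-t)/t)) t :=
      ((contDiffAt_const.sub contDiffAt_id).div contDiffAt_id ht').log hne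
    have hA : ContDiffAt ℝ 2 (fun t : ℝ => 6*t^3) t := by fun_prop
    have hB1 : ContDiffAt ℝ 2 (fun t : ℝ => 6*t^2) t := by fun_prop
    have hB2 : ContDiffAt ℝ 2 (fun t : ℝ => 3*t) t := by fun_prop
    have hC1 : ContDiffAt ℝ 2 (fun t : ℝ => α₁ * (3*t^2 - 3*t + 1)) t := by fun_prop
    have hC2 : ContDiffAt ℝ 2 (fun t : ℝ => α₂ * (1-t)^3) t := by fun_prop
    exact ((contDiffAt_const.mul ((((hA.mul hlogC).add hB1).add hB2).sub contDiffAt_const)).add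
      hC1).add hC2
  · norm_num [Real.log_one]
    ring
  · rw [hderiv _ hhalf, hU1def]
    norm_num [Real.log_one]
    ring
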